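/- The graph translation operator T_i is unitary if and only if |φ_k(i)| = 1/√N for all k = 0, ..., N-1. -/

import Mathlib

/-- The matrix of the graph translation operator `T_i`:
`(T_i f)(n) = √N Σ_k ⟨f,φ_k⟩ φ_k*(i) φ_k(n)`. -/
noncomputable def transMat {N : ℕ} (φ : Fin N → Fin N → ℂ) (i : Fin N) :
    Matrix (Fin N) (Fin N) ℂ :=
  Matrix.of fun n m => (Real.sqrt N : ℂ) * ∑ k, star (φ k i) * φ k n * star (φ k m)

open Matrix in
/-- The graph translation operator `T_i` is unitary if and only if
`|φ_k(i)| = 1/√N` for all `k = 0, …, N-1`. -/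
theorem transMat_unitary_iff (N : ℕ) (G : SimpleGraph (Fin N)) [DecidableRel G.Adj]
    (φ : Fin N → Fin N → ℂ) (μ : Fin N → ℝ)
    (heig : ∀ k, (G.lapMatrix ℂ).mulVec (φ k) = (μ k : ℂ) • φ k)
    (horth : ∀ k l, (∑ n, φ k n * star (φ l n)) = if k = l then (1 : ℂ) else 0)
    (i : Fin N) :
    transMat φ i ∈ Matrix.unitaryGroup (Fin N) ℂ ↔
      ∀ k, ‖φ k i‖ = 1 / Real.sqrt N := by
  classical
  set W : Matrix (Fin N) (Fin N) ℂ := Matrix.of (fun n k => φ k n) with hWdef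
  set D : Matrix (Fin N) (Fin N) ℂ := Matrix.diagonal (fun k => star (φ k i)) with hDdef
  have hWHW : Wᴴ * W = 1 := by
    ext k l
    have h0 := congrArg star (horth k l)
    simp only [star_sum, star_mul', star_star] at h0
    simp only [Matrix.mul_apply, Matrix.conjTranspose_apply, hWdef, Matrix.of_apply,
      Matrix.one_apply]
    rw [h0]
    split_ifs <;> simp
  have hWWH : W * Wᴴ = 1 := mul_eq_one_comm.mp hWHW
  have hWD : W * D = Matrix.of (fun n k => φ k n * star (φ k i)) := by
    ext n k
    rw [hDdef, Matrix.mul_diagonal]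
    simp [hWdef]
  have hM : transMat φ i = (Real.sqrt N : ℂ) • (W * D * Wᴴ) := by
    ext n m
    rw [Matrix.smul_apply, hWD]
    simp only [transMat, Matrix.of_apply, Matrix.mul_apply, Matrix.conjTranspose_apply,
      hWdef, smul_eq_mul, Finset.mul_sum]
    exact Finset.sum_congr rfl fun k _ => by ring
  have hstar : star (transMat φ i) = (Real.sqrt N : ℂ) • (W * Dᴴ * Wᴴ) := by
    rw [hM]
    rw [Matrix.star_eq_conjTranspose, Matrix.conjTranspose_smul, Matrix.conjTranspose_mul,
      Matrix.conjTranspose_mul, Matrix.conjTranspose_conjTranspose]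
    simp [Complex.star_def, Complex.conj_ofReal, Matrix.mul_assoc, RCLike.star_def]
  have hNR : ((Real.sqrt N : ℂ)) * (Real.sqrt N : ℂ) = (N : ℂ) := by
    rw [← Complex.ofReal_mul, Real.mul_self_sqrt (Nat.cast_nonneg N)]
    norm_num
  have hDD : Dᴴ * D = Matrix.diagonal (fun k => φ k i * star (φ k i)) := by
    rw [hDdef, Matrix.diagonal_conjTranspose, Matrix.diagonal_mul_diagonal]
    congr 1
    funext k
    simp
  have hsmuldiag : (N : ℂ) • Matrix.diagonal (fun k => φ k i * star (φ k i))
      = Matrix.diagonal (fun k => (N : ℂ) * (φ k i * star (φ k i))) := by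
    ext a b
    by_cases hab : a = b <;> simp [Matrix.diagonal_apply, hab]
  have hprod : star (transMat φ i) * transMat φ i
      = W * Matrix.diagonal (fun k => (N : ℂ) * (φ k i * star (φ k i))) * Wᴴ := by
    rw [hstar, hM, Matrix.smul_mul, Matrix.mul_smul, smul_smul, hNR]
    have hmid : (W * Dᴴ * Wᴴ) * (W * D * Wᴴ) = W * (Dᴴ * D) * Wᴴ := by
      calc (W * Dᴴ * Wᴴ) * (W * D * Wᴴ)
          = W * Dᴴ * (Wᴴ * W) * (D * Wᴴ) := by simp only [Matrix.mul_assoc]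
        _ = W * (Dᴴ * D) * Wᴴ := by rw [hWHW, Matrix.mul_one]; simp only [Matrix.mul_assoc]
    rw [hmid, hDD, ← hsmuldiag, Matrix.mul_smul, Matrix.smul_mul]
  have hdiag1 : ∀ f : Fin N → ℂ, Matrix.diagonal f = 1 ↔ ∀ k, f k = 1 := by
    intro f
    constructor
    · intro h k
      have := congrArg (fun A => A k k) h
      simpa using this
    · intro h
      ext a b
      by_cases hab : a = b <;> simp [Matrix.diagonal_apply, Matrix.one_apply, hab, h]
  have hconj : ∀ (E : Matrix (Fin N) (Fin N) ℂ), W * E * Wᴴ = 1 ↔ E = 1 := by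
    intro E
    constructor
    · intro h
      have h2 : Wᴴ * (W * E * Wᴴ) * W = Wᴴ * W := by rw [h, Matrix.mul_one]
      calc E = (Wᴴ * W) * E * (Wᴴ * W) := by rw [hWHW, Matrix.one_mul, Matrix.mul_one]
        _ = Wᴴ * (W * E * Wᴴ) * W := by simp only [Matrix.mul_assoc]
        _ = Wᴴ * W := h2
        _ = 1 := hWHW
    · intro h; rw [h, Matrix.mul_one, hWWH]
  rw [Matrix.mem_unitaryGroup_iff', hprod, hconj, hdiag1]
  apply forall_congr'
  intro k
  have hN : (0 : ℝ) < N := by exact_mod_cast k.pos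
  have hNC : (N : ℂ) ≠ 0 := by
    simp only [ne_eq, Nat.cast_eq_zero]
    exact_mod_cast hN.ne'
  have hz : φ k i * star (φ k i) = ((Complex.normSq (φ k i) : ℝ) : ℂ) := Complex.mul_conj _
  rw [hz]
  constructor
  · intro h
    have h' : (N : ℝ) * Complex.normSq (φ k i) = 1 := by exact_mod_cast h
    have hns : Complex.normSq (φ k i) = 1 / N := by
      field_simp at h' ⊢
      linarith
    rw [Complex.norm_def, hns, one_div, Real.sqrt_inv, one_div]
  · intro h
    have hns : Complex.normSq (φ k i) = 1 / N := by
      have h2 := congrArg (fun x : ℝ => x ^ 2) h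
      simpa [Complex.sq_norm, div_pow, Real.sq_sqrt hN.le] using h2
    rw [hns]
    push_cast
    field_simp
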